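/- arXiv:1108.4201 — 11 statements merged into one kernel-verified Lean document; each statement's English description precedes it below -/
import Mathlib

section
/- Let f : ℝ → ℝ and a : ℝ. Then f is continuous at a if and only if for every hyperreal x infinitely close to a (i.e., Hyperreal.IsSt x a), the natural extension of f satisfies Hyperreal.IsSt (Filter.Germ.map f x) (f a). (Robinson's nonstandard characterization of Cauchy's infinitesimal definition of continuity: an infinitely small increment of the variable always produces an infinitely small increment of the function.) -/
open Hyperreal Filter Topology

theorem cauchy_continuity_nonstandard (f : ℝ → ℝ) (a : ℝ) :
    ContinuousAt f a ↔
      ∀ x : ℝ*, Hyperreal.IsSt x a → Hyperreal.IsSt (Filter.Germ.map f x) (f a) := by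
  constructor
  · intro hf x hx
    rw [isSt_iff_tendsto] at hx
    refine isSt_iff_tendsto.2 ?_
    induction x using Filter.Germ.inductionOn with
    | h g =>
      rw [Filter.Germ.map_coe, Filter.Germ.coe_tendsto] at *
      exact hf.tendsto.comp hx
  · intro h
    rw [ContinuousAt, Metric.tendsto_nhds_nhds]
    by_contra hc
    push_neg at hc
    obtain ⟨eps, heps, hs⟩ := hc
    choose g hg1 hg2 using fun n : ℕ => hs (1 / (n + 1)) (by positivity)
    have hx : IsSt (ofSeq g) a := by
      rw [isSt_iff_tendsto, ofSeq, Filter.Germ.coe_tendsto]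
      have : Tendsto g atTop (𝓝 a) := by
        rw [Metric.tendsto_atTop]
        intro δ hδ
        obtain ⟨N, hN⟩ := exists_nat_gt (1 / δ)
        refine ⟨N, fun n hn => lt_of_lt_of_le (hg1 n) ?_⟩
        rw [div_le_iff₀ (by positivity)]
        have : 1 / δ ≤ (n : ℝ) + 1 := hN.le.trans (by exact_mod_cast le_trans hn (Nat.le_succ n))
        calc (1:ℝ) = δ * (1/δ) := by field_simp
        _ ≤ δ * ((n:ℝ)+1) := by gcongr
      exact this.mono_left Nat.hyperfilter_le_atTop
    have := h _ hx
    replace this := isSt_iff_tendsto.1 this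
    rw [ofSeq, Filter.Germ.map_coe, Filter.Germ.coe_tendsto,
      Metric.tendsto_nhds] at this
    have h3 : {n | dist ((f ∘ g) n) (f a) < eps} ∈ hyperfilter ℕ := this eps heps
    have h2 : {n | dist ((f ∘ g) n) (f a) < eps} = ∅ := by
      ext n; simp only [Set.mem_setOf_eq, Set.mem_empty_iff_false, iff_false, not_lt]
      exact hg2 n
    rw [h2] at h3
    exact Set.finite_empty.notMem_hyperfilter h3
end

section
/- Let a : ℕ → ℝ be a real sequence and L : ℝ. Then a tends to L (Filter.Tendsto a Filter.atTop (nhds L)) if and only if for every infinite hypernatural N, the hyperreal Filter.Germ.map a N is infinitely close to L (Hyperreal.IsSt (Filter.Germ.map a N) L). (Nonstandard characterization of the limit of a variable quantity.) -/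
open Hyperreal Filter

/-- The hypernaturals: the ultrapower of `ℕ` by the hyperfilter on `ℕ`. -/
abbrev Hypernat : Type := Filter.Germ (Filter.hyperfilter ℕ : Filter ℕ) ℕ

notation "ℕ*" => Hypernat

theorem tendsto_iff_isSt_of_infinite (a : ℕ → ℝ) (L : ℝ) :
    Filter.Tendsto a Filter.atTop (nhds L) ↔
      ∀ N : ℕ*, (∀ m : ℕ, (m : ℕ*) < N) →
        Hyperreal.IsSt (Filter.Germ.map a N) L := by
  constructor
  · intro h N hN
    induction N using Filter.Germ.inductionOn with
    | h f =>
      have hmap : Filter.Germ.map a (↑f : ℕ*) = Hyperreal.ofSeq (a ∘ f) := rfl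
      rw [hmap, isSt_ofSeq_iff_tendsto]
      have hf : Tendsto f (hyperfilter ℕ : Filter ℕ) atTop := by
        rw [tendsto_atTop]
        intro m
        have := hN (m + 1)
        rw [← Filter.Germ.natCast_def] at this
        exact (Filter.Germ.coe_lt.mp this).mono fun n hn => by simp at hn; omega
      exact h.comp hf
  · intro h
    by_contra hT
    have hex : ∃ e > (0:ℝ), ∀ m : ℕ, ∃ n ≥ m, e ≤ |a n - L| := by
      rw [Metric.tendsto_atTop] at hT
      push_neg at hT
      obtain ⟨e, he, hT⟩ := hT
      refine ⟨e, he, fun m => ?_⟩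
      obtain ⟨n, hn, hd⟩ := hT m
      exact ⟨n, hn, by simpa [Real.dist_eq] using hd⟩
    obtain ⟨e, he, hfreq⟩ := hex
    choose g hg hg' using fun m => hfreq m
    set N : ℕ* := (↑g : ℕ*) with hNdef
    have hinf : ∀ m : ℕ, (m : ℕ*) < N := by
      intro m
      rw [← Filter.Germ.natCast_def]
      refine Filter.Germ.coe_lt.mpr ?_
      have : ∀ᶠ n in atTop, m < g n := by
        filter_upwards [eventually_gt_atTop m] with n hn
        exact lt_of_lt_of_le hn (hg n)
      exact this.filter_mono Nat.hyperfilter_le_atTop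
    have hmap : Filter.Germ.map a N = Hyperreal.ofSeq (a ∘ g) := rfl
    have hst := h N hinf
    rw [hmap, isSt_ofSeq_iff_tendsto] at hst
    have hev : ∀ᶠ n in (hyperfilter ℕ : Filter ℕ), dist ((a ∘ g) n) L < e :=
      Metric.tendsto_nhds.mp hst e he
    obtain ⟨n, hn⟩ := hev.exists
    simp only [Function.comp, Real.dist_eq] at hn
    exact absurd hn (not_lt.mpr (hg' n))
end

section
/- Let f : ℕ → ℝ → ℝ, g : ℝ → ℝ, and S ⊆ ℝ. Then (f n) converges uniformly to g on S (TendstoUniformlyOn f g Filter.atTop S) if and only if for every infinite hypernatural N and every hyperreal X belonging to the natural extension of S (i.e., Filter.Germ.LiftPred (· ∈ S) X), the hyperreal Filter.Germ.map₂ f N X − Filter.Germ.map g X is infinitesimal. (Uniform convergence is equivalent to the error term going to zero at ALL values of x in the B-continuum, for all infinite indices.) -/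
open Hyperreal Filter

theorem tendstoUniformlyOn_iff_infinitesimal (f : ℕ → ℝ → ℝ) (g : ℝ → ℝ) (S : Set ℝ) :
    TendstoUniformlyOn f g Filter.atTop S ↔
      ∀ N : ℕ*, (∀ m : ℕ, (m : ℕ*) < N) →
        ∀ X : ℝ*, Filter.Germ.LiftPred (· ∈ S) X →
          Hyperreal.Infinitesimal (Filter.Germ.map₂ f N X - Filter.Germ.map g X) := by
  rw [Metric.tendstoUniformlyOn_iff]
  constructor
  · intro h N hN X hX
    induction N using Filter.Germ.inductionOn with | h n =>
    induction X using Filter.Germ.inductionOn with | h x =>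
    rw [Filter.Germ.liftPred_coe] at hX
    have heq : Filter.Germ.map₂ f (↑n) (↑x) - Filter.Germ.map g (↑x)
        = ofSeq (fun i => f (n i) (x i) - g (x i)) := rfl
    change Infinitesimal (ofSeq (fun i => f (n i) (x i) - g (x i)))
    rw [show Infinitesimal _ = IsSt _ 0 from rfl, isSt_ofSeq_iff_tendsto,
      Metric.tendsto_nhds]
    intro e he
    obtain ⟨M, hM⟩ := (h e he).exists_forall_of_atTop
    have hn : ∀ᶠ i in (hyperfilter ℕ : Filter ℕ), M < n i := by
      have hlt := hN M
      rwa [← Filter.Germ.natCast_def, Filter.Germ.coe_lt] at hlt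
    filter_upwards [hn, hX] with i hi hxi
    rw [Real.dist_eq, sub_zero, abs_sub_comm, ← Real.dist_eq]
    exact hM (n i) hi.le (x i) hxi
  · intro h
    by_contra hc
    push_neg at hc
    obtain ⟨e, he, hfreq⟩ := hc
    simp only [← not_lt] at hfreq
    have hchoice : ∀ i : ℕ, ∃ n, i ≤ n ∧ ∃ x ∈ S, e ≤ dist (g x) (f n x) := by
      intro i
      obtain ⟨n, hn, hx⟩ := (hfreq.and_eventually (eventually_ge_atTop i)).exists
      push_neg at hn
      obtain ⟨x, hxS, hd⟩ := hn
      exact ⟨n, hx, x, hxS, hd⟩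
    choose n hni x hxS hdist using hchoice
    have hN : ∀ m : ℕ, (m : ℕ*) < (↑n : ℕ*) := by
      intro m
      rw [← Filter.Germ.natCast_def, Filter.Germ.coe_lt]
      have hm : ∀ᶠ i in (hyperfilter ℕ : Filter ℕ), m < i :=
        (eventually_gt_atTop m).filter_mono (Nat.hyperfilter_le_atTop)
      filter_upwards [hm] with i hi
      exact lt_of_lt_of_le hi (hni i)
    have hX : Filter.Germ.LiftPred (· ∈ S) (ofSeq x) :=
      Filter.Germ.liftPred_coe.mpr (Eventually.of_forall hxS)
    have hinf := h (↑n) hN (ofSeq x) hX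
    have heq : Filter.Germ.map₂ f (↑n) (ofSeq x) - Filter.Germ.map g (ofSeq x)
        = ofSeq (fun i => f (n i) (x i) - g (x i)) := rfl
    rw [heq, show Infinitesimal _ = IsSt _ 0 from rfl, isSt_ofSeq_iff_tendsto,
      Metric.tendsto_nhds] at hinf
    obtain ⟨i, hi⟩ := (hinf e he).exists
    rw [Real.dist_eq, sub_zero, abs_sub_comm, ← Real.dist_eq] at hi
    exact absurd (hdist i) (not_le.mpr hi)
end

section
/- Let f : ℕ → ℝ → ℝ and S ⊆ ℝ. Then (f n) is uniformly Cauchy on S (UniformCauchySeqOn f Filter.atTop S) if and only if for all infinite hypernaturals N and N' and every hyperreal X belonging to the natural extension of S (i.e., Filter.Germ.LiftPred (· ∈ S) X), the hyperreal Filter.Germ.map₂ f N X − Filter.Germ.map₂ f N' X is infinitesimal. (This is the nonstandard reading of Cauchy's 1853 hypothesis that s_{n'} − s_n 'always' becomes infinitely small.) -/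
open Hyperreal Filter

theorem uniformCauchySeqOn_iff_infinitesimal (f : ℕ → ℝ → ℝ) (S : Set ℝ) :
    UniformCauchySeqOn f Filter.atTop S ↔
      ∀ N N' : ℕ*, (∀ m : ℕ, (m : ℕ*) < N) → (∀ m : ℕ, (m : ℕ*) < N') →
        ∀ X : ℝ*, Filter.Germ.LiftPred (· ∈ S) X →
          Hyperreal.Infinitesimal (Filter.Germ.map₂ f N X - Filter.Germ.map₂ f N' X) := by
  rw [Metric.uniformCauchySeqOn_iff]
  constructor
  · intro h N N' hN hN' X hX
    induction N using Filter.Germ.inductionOn with | h n =>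
    induction N' using Filter.Germ.inductionOn with | h n' =>
    induction X using Filter.Germ.inductionOn with | h x =>
    refine Hyperreal.infinitesimal_def.mpr ?_
    intro r hr
    obtain ⟨M, hM⟩ := h r hr
    have h1 : ∀ᶠ i in (hyperfilter ℕ : Filter ℕ), M < n i := Filter.Germ.coe_lt.mp (hN M)
    have h2 : ∀ᶠ i in (hyperfilter ℕ : Filter ℕ), M < n' i := Filter.Germ.coe_lt.mp (hN' M)
    have h3 : ∀ᶠ i in (hyperfilter ℕ : Filter ℕ), x i ∈ S := Filter.Germ.liftPred_coe.mp hX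
    rw [Filter.Germ.map₂_coe, Filter.Germ.map₂_coe, ← Filter.Germ.coe_sub]
    have key : ∀ᶠ i in (hyperfilter ℕ : Filter ℕ),
        |f (n i) (x i) - f (n' i) (x i)| < r := by
      filter_upwards [h1, h2, h3] with i hi1 hi2 hi3
      have := hM (n i) hi1.le (n' i) hi2.le (x i) hi3
      rwa [Real.dist_eq] at this
    constructor
    · rw [← Hyperreal.coe_neg]
      exact Filter.Germ.coe_lt.mpr (key.mono fun i hi => by
        have := abs_lt.mp hi; simpa using this.1)
    · exact Filter.Germ.coe_lt.mpr (key.mono fun i hi => by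
        have := abs_lt.mp hi; simpa using this.2)
  · intro h
    by_contra hc
    push_neg at hc
    obtain ⟨e, he, hM⟩ := hc
    choose m hm n hn x hxS hdist using hM
    have inf : ∀ g : ℕ → ℕ, (∀ i, i ≤ g i) →
        ∀ k : ℕ, (k : Filter.Germ (Filter.hyperfilter ℕ : Filter ℕ) ℕ) < ↑g := by
      intro g hg k
      refine Filter.Germ.coe_lt.mpr ?_
      have : ∀ᶠ i in (hyperfilter ℕ : Filter ℕ), k < i := by
        refine Filter.Eventually.filter_mono (Filter.hyperfilter_le_cofinite) ?_
        rw [Filter.eventually_cofinite]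
        exact (Set.finite_Iic k).subset fun i hi => by simpa using hi
      exact this.mono fun i hi => lt_of_lt_of_le hi (hg i)
    have H := h ↑m ↑n (inf m hm) (inf n hn) (Filter.Germ.ofFun x) (Filter.Germ.liftPred_coe.mpr
      (Filter.Eventually.of_forall hxS))
    rw [Filter.Germ.map₂_coe, Filter.Germ.map₂_coe, ← Filter.Germ.coe_sub,
      ] at H
    replace H := Hyperreal.infinitesimal_def.mp H
    obtain ⟨H1, H2⟩ := H e he
    rw [← Hyperreal.coe_neg] at H1
    have H1' := Filter.Germ.coe_lt.mp H1
    have H2' := Filter.Germ.coe_lt.mp H2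
    have : ∀ᶠ i in (hyperfilter ℕ : Filter ℕ), False := by
      filter_upwards [H1', H2'] with i h1 h2
      have := hdist i
      rw [Real.dist_eq] at this
      simp only [Pi.sub_apply] at h1 h2
      have : |f (m i) (x i) - f (n i) (x i)| < e := abs_lt.mpr ⟨by simpa using h1, h2⟩
      have := hdist i; rw [Real.dist_eq] at this; linarith
    exact Filter.NeBot.ne (by infer_instance) (Filter.eventually_false_iff_eq_bot.mp this)
end

section
/- (Cauchy's 1853 sum theorem, Robinson's reading.) Let u : ℕ → ℝ → ℝ be such that each u k is continuous on ℝ, and let s : ℕ → ℝ → ℝ be the partial sums, s n x = ∑_{k < n} u k x. Suppose that for all hypernaturals N ≤ N' with N infinite and for EVERY hyperreal X : ℝ*, the difference Filter.Germ.map₂ s N' X − Filter.Germ.map₂ s N X is infinitesimal. Then there exists a continuous function S : ℝ → ℝ such that for every real x, the partial sums s n x tend to S x as n → ∞. -/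
open Hyperreal Filter

theorem cauchy_1853_sum_theorem (u : ℕ → ℝ → ℝ) (hu : ∀ k : ℕ, Continuous (u k))
    (s : ℕ → ℝ → ℝ) (hs : ∀ n x, s n x = ∑ k ∈ Finset.range n, u k x)
    (h : ∀ N N' : ℕ*, (∀ m : ℕ, (m : ℕ*) < N) → N ≤ N' →
      ∀ X : ℝ*, Hyperreal.Infinitesimal (Filter.Germ.map₂ s N' X - Filter.Germ.map₂ s N X)) :
    ∃ S : ℝ → ℝ, Continuous S ∧
      ∀ x : ℝ, Filter.Tendsto (fun n => s n x) Filter.atTop (nhds (S x)) := by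
  -- Step 1 : uniform Cauchy criterion, by transfer
  have key : ∀ δ : ℝ, 0 < δ → ∃ n₀ : ℕ, ∀ n, n₀ ≤ n → ∀ n', n ≤ n' → ∀ x : ℝ,
      |s n' x - s n x| < δ := by
    by_contra hc
    push_neg at hc
    obtain ⟨δ, hδ, hc⟩ := hc
    choose f hf g hfg x hx using hc
    set N : ℕ* := (↑f : ℕ*) with hN
    set N' : ℕ* := (↑g : ℕ*)
    set X : ℝ* := Hyperreal.ofSeq x
    have hNinf : ∀ m : ℕ, (m : ℕ*) < N := by
      intro m
      rw [← Filter.Germ.natCast_def]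
      refine Filter.Germ.coe_lt.mpr ?_
      have h1 : ∀ᶠ k in (Filter.hyperfilter ℕ : Filter ℕ), m < k :=
        Nat.hyperfilter_le_atTop (Filter.eventually_gt_atTop m)
      exact h1.mono fun k hk => lt_of_lt_of_le hk (hf k)
    have hle : N ≤ N' := Filter.Germ.coe_le.mpr (Filter.Eventually.of_forall hfg)
    have hinf := h N N' hNinf hle X
    have hmap : Filter.Germ.map₂ s N' X - Filter.Germ.map₂ s N X
        = Hyperreal.ofSeq (fun k => s (g k) (x k) - s (f k) (x k)) := rfl
    rw [hmap] at hinf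
    have h1 : Hyperreal.ofSeq (fun k => s (g k) (x k) - s (f k) (x k)) < (δ : ℝ*) :=
      (Hyperreal.infinitesimal_def.mp hinf δ hδ).2
    have h2 : -(δ : ℝ*) < Hyperreal.ofSeq (fun k => s (g k) (x k) - s (f k) (x k)) :=
      (Hyperreal.infinitesimal_def.mp hinf δ hδ).1
    have h2' : Hyperreal.ofSeq (fun _ => -δ) < Hyperreal.ofSeq (fun k => s (g k) (x k) - s (f k) (x k)) := by
      convert h2 using 2
      rfl
    have hcδ : (δ : ℝ*) = Hyperreal.ofSeq (fun _ => δ) := rfl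
    rw [hcδ] at h1
    have h1' := Filter.Germ.coe_lt.mp h1
    have h2'' := Filter.Germ.coe_lt.mp h2'
    have hev : ∀ᶠ k in (Filter.hyperfilter ℕ : Filter ℕ),
        |s (g k) (x k) - s (f k) (x k)| < δ := by
      filter_upwards [h1', h2''] with k hk1 hk2
      exact abs_lt.mpr ⟨hk2, hk1⟩
    obtain ⟨k, hk⟩ := hev.exists
    exact absurd hk (not_lt.mpr (hx k))
  -- Step 2 : uniform Cauchy sequence
  have hucs : UniformCauchySeqOn s Filter.atTop Set.univ := by
    rw [Metric.uniformCauchySeqOn_iff]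
    intro δ hδ
    obtain ⟨n₀, hn₀⟩ := key δ hδ
    refine ⟨n₀, fun m hm n hn x _ => ?_⟩
    rcases le_total m n with hmn | hnm
    · rw [dist_comm]
      simpa [Real.dist_eq] using hn₀ m hm n hmn x
    · simpa [Real.dist_eq] using hn₀ n hn m hnm x
  -- Step 3 : pointwise limits exist
  have hcauchy : ∀ x : ℝ, ∃ L : ℝ, Filter.Tendsto (fun n => s n x) Filter.atTop (nhds L) := by
    intro x
    refine cauchySeq_tendsto_of_complete ?_
    rw [Metric.cauchySeq_iff]
    intro δ hδ
    obtain ⟨n₀, hn₀⟩ := key δ hδ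
    refine ⟨n₀, fun m hm n hn => ?_⟩
    rcases le_total m n with hmn | hnm
    · rw [dist_comm]
      simpa [Real.dist_eq] using hn₀ m hm n hmn x
    · simpa [Real.dist_eq] using hn₀ n hn m hnm x
  choose S hS using hcauchy
  refine ⟨S, ?_, hS⟩
  -- Step 4 : uniform convergence and continuity
  have htu : TendstoUniformlyOn s S Filter.atTop Set.univ :=
    hucs.tendstoUniformlyOn_of_tendsto fun x _ => hS x
  rw [tendstoUniformlyOn_univ] at htu
  refine htu.continuous (Filter.Eventually.of_forall fun n => ?_).frequently
  have : s n = fun x => ∑ k ∈ Finset.range n, u k x := by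
    funext x; exact hs n x
  rw [this]
  exact continuous_finset_sum _ fun k _ => hu k
end

section
/- (Abel's series fails Cauchy's 1853 hypothesis at the infinitesimal generated by 1/n.) Let a : ℕ → ℝ be defined by a n = ∑_{k ∈ Finset.Ioc n (2n)} Real.sin (k / n) / k. Then the hyperreal Hyperreal.ofSeq a is infinitely close to the real number ∫ t in 1..2, Real.sin t / t (i.e., Hyperreal.IsSt (Hyperreal.ofSeq a) (∫ t in 1..2, Real.sin t / t)), and Hyperreal.ofSeq a is NOT infinitesimal. -/
open Hyperreal Real Set Filter intervalIntegral

lemma sinc_strictAnti : StrictAntiOn (fun t : ℝ => Real.sin t / t) (Set.Icc 1 2) := by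
  have hpi := Real.pi_gt_three
  apply strictAntiOn_of_deriv_neg (convex_Icc 1 2)
  · apply Real.continuous_sin.continuousOn.div continuousOn_id
    intro x hx
    have : (1:ℝ) ≤ x := hx.1
    positivity
  · intro x hx
    rw [interior_Icc] at hx
    have hx0 : (0:ℝ) < x := by linarith [hx.1]
    have hd : HasDerivAt (fun t : ℝ => Real.sin t / t)
        ((Real.cos x * x - Real.sin x * 1) / x ^ 2) x :=
      (Real.hasDerivAt_sin x).div (hasDerivAt_id x) hx0.ne'
    rw [hd.deriv]
    have hsin : 0 < Real.sin x := Real.sin_pos_of_pos_of_lt_pi hx0 (by linarith [hx.2])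
    have hnum : x * Real.cos x < Real.sin x := by
      rcases le_or_gt (Real.cos x) 0 with h | h
      · nlinarith
      · have hx2 : x < Real.pi / 2 := by
          by_contra hc
          push_neg at hc
          have := Real.cos_nonpos_of_pi_div_two_le_of_le hc (by linarith [hx.2])
          linarith
        have htan := Real.lt_tan hx0 hx2
        rw [Real.tan_eq_sin_div_cos] at htan
        calc x * Real.cos x < (Real.sin x / Real.cos x) * Real.cos x := by
              exact mul_lt_mul_of_pos_right htan h
          _ = Real.sin x := by field_simp
    have hx2 : (0:ℝ) < x ^ 2 := by positivity
    apply div_neg_of_neg_of_pos _ hx2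
    nlinarith

lemma sinc_anti : AntitoneOn (fun t : ℝ => Real.sin t / t) (Set.Icc 1 2) :=
  sinc_strictAnti.antitoneOn

lemma key_tendsto : Filter.Tendsto
    (fun n : ℕ => ∑ k ∈ Finset.Ioc n (2 * n), Real.sin ((k : ℝ) / (n : ℝ)) / (k : ℝ))
    Filter.atTop (nhds (∫ t in (1 : ℝ)..2, Real.sin t / t)) := by
  set I := ∫ t in (1 : ℝ)..2, Real.sin t / t with hI
  set a : ℕ → ℝ := fun n => ∑ k ∈ Finset.Ioc n (2 * n), Real.sin ((k : ℝ) / (n : ℝ)) / (k : ℝ)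
    with ha
  have hmain : ∀ n : ℕ, 1 ≤ n → I - 1 / n ≤ a n ∧ a n ≤ I := by
    intro n hn
    have hn0 : (0:ℝ) < (n:ℝ) := by exact_mod_cast hn
    set g : ℝ → ℝ := fun x => Real.sin (x / n) / x with hg
    -- antitone on [n, 2n]
    have hganti : AntitoneOn g (Set.Icc (n:ℝ) ((2*n : ℕ) : ℝ)) := by
      intro x hx y hy hxy
      have hx1 : (n:ℝ) ≤ x := hx.1
      have hy2 : y ≤ ((2*n:ℕ):ℝ) := hy.2
      have h2n : ((2*n:ℕ):ℝ) = 2 * n := by push_cast; ring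
      have hx0 : (0:ℝ) < x := lt_of_lt_of_le hn0 hx1
      have hy0 : (0:ℝ) < y := lt_of_lt_of_le hn0 (le_trans hx1 hxy)
      have hxm : x / n ∈ Set.Icc (1:ℝ) 2 := by
        constructor
        · rw [le_div_iff₀ hn0]; linarith
        · rw [div_le_iff₀ hn0]; rw [h2n] at hx; linarith [hx.2]
      have hym : y / n ∈ Set.Icc (1:ℝ) 2 := by
        constructor
        · rw [le_div_iff₀ hn0]; linarith [le_trans hx1 hxy]
        · rw [div_le_iff₀ hn0]; rw [h2n] at hy; linarith
      have h := sinc_anti hxm hym (by gcongr)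
      simp only at h
      have hx' : Real.sin (x / n) / (x / n) = n * (Real.sin (x / n) / x) := by
        field_simp
      have hy' : Real.sin (y / n) / (y / n) = n * (Real.sin (y / n) / y) := by
        field_simp
      rw [hx', hy'] at h
      have := (mul_le_mul_iff_of_pos_left hn0).mp h
      simpa [hg] using this
    -- the integral over [n, 2n] equals I
    have hint : (∫ x in (n:ℝ)..((2*n:ℕ):ℝ), g x) = I := by
      have h2n : ((2*n:ℕ):ℝ) = 2 * n := by push_cast; ring
      have hgf : ∀ x : ℝ, g x = (fun t => Real.sin t / (n * t)) (x / n) := by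
        intro x
        simp only [hg]
        rcases eq_or_ne x 0 with rfl | hx
        · simp
        · congr 1
          field_simp
      have hmid : (∫ t in (1:ℝ)..2, Real.sin t / (n * t)) = (n:ℝ)⁻¹ * I := by
        rw [hI, ← intervalIntegral.integral_const_mul]
        apply intervalIntegral.integral_congr
        intro t ht
        rw [Set.uIcc_of_le (by norm_num)] at ht
        have ht0 : (0:ℝ) < t := lt_of_lt_of_le one_pos ht.1
        field_simp
      calc (∫ x in (n:ℝ)..((2*n:ℕ):ℝ), g x)
          = ∫ x in (n:ℝ)..((2*n:ℕ):ℝ), (fun t => Real.sin t / (n * t)) (x / n) := by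
            apply intervalIntegral.integral_congr
            intro x _
            exact hgf x
        _ = (n:ℝ) • ∫ t in ((n:ℝ)/n)..(((2*n:ℕ):ℝ)/n), Real.sin t / (n * t) := by
            exact intervalIntegral.integral_comp_div (fun t => Real.sin t / (n * t)) hn0.ne'
        _ = (n:ℝ) • ∫ t in (1:ℝ)..2, Real.sin t / (n * t) := by
            rw [div_self hn0.ne', h2n, mul_div_assoc, div_self hn0.ne', mul_one]
        _ = I := by
            rw [hmid, smul_eq_mul, ← mul_assoc, mul_inv_cancel₀ hn0.ne', one_mul]
    -- rewrite a n as a sum over Ico with +1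
    have hsum : a n = ∑ i ∈ Finset.Ico n (2*n), g ((i+1 : ℕ) : ℝ) := by
      rw [ha]
      refine Finset.sum_nbij' (fun k => k - 1) (fun i => i + 1) ?_ ?_ ?_ ?_ ?_
      · intro k hk
        simp only [Finset.mem_Ioc] at hk
        simp only [Finset.mem_Ico]
        omega
      · intro i hi
        simp only [Finset.mem_Ico] at hi
        simp only [Finset.mem_Ioc]
        omega
      · intro k hk
        simp only [Finset.mem_Ioc] at hk
        show k - 1 + 1 = k
        omega
      · intro i hi
        show i + 1 - 1 = i
        omega
      · intro k hk
        simp only [Finset.mem_Ioc] at hk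
        show Real.sin ((k : ℝ) / n) / k = g ((k - 1 + 1 : ℕ) : ℝ)
        have : k - 1 + 1 = k := by omega
        rw [this]
    have hle2n : n ≤ 2 * n := by omega
    constructor
    · -- lower bound
      have hI_le : (∫ x in (n:ℝ)..((2*n:ℕ):ℝ), g x) ≤ ∑ i ∈ Finset.Ico n (2*n), g i :=
        AntitoneOn.integral_le_sum_Ico hle2n hganti
      -- split sums
      have hsplit : (∑ i ∈ Finset.Ico n (2*n), g i) + g ((2*n:ℕ):ℝ)
          = g (n:ℝ) + ∑ k ∈ Finset.Ioc n (2*n), g k := by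
        have h1 : Finset.Ico n (2*n) = insert n (Finset.Ico (n+1) (2*n)) := by
          ext x; simp only [Finset.mem_Ico, Finset.mem_insert]; omega
        have h2 : Finset.Ioc n (2*n) = insert (2*n) (Finset.Ico (n+1) (2*n)) := by
          ext x; simp only [Finset.mem_Ioc, Finset.mem_insert, Finset.mem_Ico]; omega
        rw [h1, h2, Finset.sum_insert (by simp), Finset.sum_insert (by simp)]
        push_cast
        ring
      have hsum2 : a n = ∑ k ∈ Finset.Ioc n (2*n), g k := rfl
      have hgn : g (n:ℝ) = Real.sin 1 / n := by
        simp [hg, div_self hn0.ne']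
      have hg2n : 0 ≤ g ((2*n:ℕ):ℝ) := by
        have h2n : ((2*n:ℕ):ℝ) = 2 * n := by push_cast; ring
        rw [hg]
        apply div_nonneg _ (by positivity)
        apply Real.sin_nonneg_of_nonneg_of_le_pi
        · positivity
        · rw [h2n, show 2 * (n:ℝ) / n = 2 by field_simp]
          linarith [Real.pi_gt_three]
      have hsin1 : Real.sin 1 ≤ 1 := Real.sin_le_one 1
      have : I ≤ ∑ k ∈ Finset.Ioc n (2*n), g k + g (n:ℝ) - g ((2*n:ℕ):ℝ) := by
        rw [← hint]
        linarith
      rw [hsum2]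
      rw [hgn] at this
      have h1n : Real.sin 1 / (n:ℝ) ≤ 1 / n := by gcongr
      linarith
    · -- upper bound
      have := AntitoneOn.sum_le_integral_Ico hle2n hganti
      rw [hint] at this
      rw [hsum]
      exact this
  -- squeeze
  have hlow : Filter.Tendsto (fun n : ℕ => I - 1 / (n:ℝ)) Filter.atTop (nhds I) := by
    have := Filter.Tendsto.const_sub I tendsto_one_div_atTop_nhds_zero_nat
    simpa using this
  apply tendsto_of_tendsto_of_tendsto_of_le_of_le' hlow tendsto_const_nhds
  · filter_upwards [Filter.eventually_ge_atTop 1] with n hn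
    exact (hmain n hn).1
  · filter_upwards [Filter.eventually_ge_atTop 1] with n hn
    exact (hmain n hn).2

theorem abel_series_fails_cauchy_hypothesis :
    Hyperreal.IsSt
      (Hyperreal.ofSeq
        (fun n : ℕ => ∑ k ∈ Finset.Ioc n (2 * n), Real.sin ((k : ℝ) / (n : ℝ)) / (k : ℝ)))
      (∫ t in (1 : ℝ)..2, Real.sin t / t) ∧
    ¬ Hyperreal.Infinitesimal
      (Hyperreal.ofSeq
        (fun n : ℕ => ∑ k ∈ Finset.Ioc n (2 * n), Real.sin ((k : ℝ) / (n : ℝ)) / (k : ℝ))) := by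
  have hst := Hyperreal.isSt_of_tendsto key_tendsto
  refine ⟨hst, ?_⟩
  intro h
  have h0 : (∫ t in (1 : ℝ)..2, Real.sin t / t) = 0 := hst.unique h
  have hpos : 0 < ∫ t in (1 : ℝ)..2, Real.sin t / t := by
    apply intervalIntegral.intervalIntegral_pos_of_pos_on
    · apply ContinuousOn.intervalIntegrable
      apply Real.continuous_sin.continuousOn.div continuousOn_id
      intro x hx
      rw [Set.uIcc_of_le (by norm_num)] at hx
      have : (1:ℝ) ≤ x := hx.1
      positivity
    · intro x hx
      have hx0 : (0:ℝ) < x := lt_trans one_pos hx.1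
      apply div_pos _ hx0
      exact Real.sin_pos_of_pos_of_lt_pi hx0 (by linarith [Real.pi_gt_three, hx.2])
    · norm_num
  linarith
end

section
/- For every real δ > 0, the sequence of partial sums of Abel's series, s n x = ∑_{k ∈ Finset.Icc 1 n} Real.sin (k * x) / k, is NOT uniformly Cauchy on the interval (0, δ): ¬ UniformCauchySeqOn (fun n x => ∑ k in Finset.Icc 1 n, Real.sin (k * x) / k) Filter.atTop (Set.Ioo 0 δ). (Hence the series ∑ sin(kx)/k does not converge uniformly on any right neighborhood of 0.) -/
theorem abel_series_not_uniformly_cauchy (δ : ℝ) (hδ : 0 < δ) :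
    ¬ UniformCauchySeqOn
        (fun (n : ℕ) (x : ℝ) => ∑ k ∈ Finset.Icc 1 n, Real.sin ((k : ℝ) * x) / (k : ℝ))
        Filter.atTop (Set.Ioo 0 δ) := by
  intro h
  rw [Metric.uniformCauchySeqOn_iff] at h
  have hs : 0 < Real.sin (1/2) := by
    apply Real.sin_pos_of_pos_of_lt_pi (by norm_num)
    linarith [Real.pi_gt_three]
  obtain ⟨N, hN⟩ := h (Real.sin (1/2) / 2) (by positivity)
  set n : ℕ := max N (Nat.ceil (1/δ) + 1) with hn
  have hn1 : 1 ≤ n := le_trans (by norm_num) (le_max_right _ _)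
  have hnN : N ≤ n := le_max_left _ _
  have hnpos : (0:ℝ) < n := by exact_mod_cast hn1
  set x : ℝ := 1 / (2 * n) with hx
  have hxpos : 0 < x := by positivity
  have hxδ : x < δ := by
    have h1 : (1/δ : ℝ) < n := by
      have : (1/δ : ℝ) ≤ Nat.ceil (1/δ) := Nat.le_ceil _
      have h2 : (Nat.ceil (1/δ) : ℝ) + 1 ≤ n := by
        exact_mod_cast le_max_right N (Nat.ceil (1/δ) + 1)
      linarith
    rw [hx, div_lt_iff₀ (by positivity)]
    rw [div_lt_iff₀ hδ] at h1
    nlinarith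
  have hxmem : x ∈ Set.Ioo 0 δ := ⟨hxpos, hxδ⟩
  have key := hN (2*n) (le_trans hnN (by omega)) n hnN x hxmem
  -- split the sum
  have hicc : ∀ m : ℕ, Finset.Icc 1 m = Finset.Ioc 0 m := fun m => rfl
  have hsplit : ∑ k ∈ Finset.Icc 1 (2*n), Real.sin ((k : ℝ) * x) / (k : ℝ)
      = (∑ k ∈ Finset.Icc 1 n, Real.sin ((k : ℝ) * x) / (k : ℝ))
        + ∑ k ∈ Finset.Ioc n (2*n), Real.sin ((k : ℝ) * x) / (k : ℝ) := by
    rw [hicc, hicc]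
    exact (Finset.sum_Ioc_consecutive _ (Nat.zero_le n) (by omega)).symm
  have hterm : ∀ k ∈ Finset.Ioc n (2*n),
      Real.sin (1/2) / (2 * n) ≤ Real.sin ((k : ℝ) * x) / (k : ℝ) := by
    intro k hk
    rw [Finset.mem_Ioc] at hk
    have hk0 : (0:ℝ) < k := by
      have : 0 < k := lt_of_le_of_lt (Nat.zero_le n) hk.1
      exact_mod_cast this
    have hkx : (k : ℝ) * x = k / (2*n) := by rw [hx]; ring
    have hlb : (1/2 : ℝ) ≤ k * x := by
      rw [hkx, le_div_iff₀ (by positivity)]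
      have : (n:ℝ) + 1 ≤ k := by exact_mod_cast hk.1
      linarith
    have hub : (k:ℝ) * x ≤ 1 := by
      rw [hkx, div_le_one (by positivity)]
      have : (k:ℝ) ≤ 2*n := by exact_mod_cast hk.2
      linarith
    have hsin : Real.sin (1/2) ≤ Real.sin ((k:ℝ) * x) := by
      apply Real.sin_le_sin_of_le_of_le_pi_div_two
      · linarith [Real.pi_pos]
      · linarith [Real.pi_gt_three]
      · exact hlb
    have hkle : (k:ℝ) ≤ 2*n := by exact_mod_cast hk.2
    calc Real.sin (1/2) / (2*n) ≤ Real.sin (1/2) / k :=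
          div_le_div_of_nonneg_left hs.le hk0 hkle
      _ ≤ Real.sin ((k:ℝ) * x) / k := by gcongr
  have hcard : (Finset.Ioc n (2*n)).card = n := by
    rw [Nat.card_Ioc]; omega
  have hsum : Real.sin (1/2) / 2 ≤ ∑ k ∈ Finset.Ioc n (2*n), Real.sin ((k : ℝ) * x) / (k : ℝ) := by
    calc Real.sin (1/2) / 2 = n * (Real.sin (1/2) / (2*n)) := by
          field_simp
      _ = ∑ _k ∈ Finset.Ioc n (2*n), Real.sin (1/2) / (2*n) := by
          rw [Finset.sum_const, hcard, nsmul_eq_mul]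
      _ ≤ _ := Finset.sum_le_sum hterm
  rw [Real.dist_eq, hsplit] at key
  have := abs_lt.mp key
  linarith [this.1, this.2]
end

section
/- (Abel's 'exception' to the 1821 sum theorem.) For every real x with 0 < x < 2π, the partial sums ∑_{k ∈ Finset.Icc 1 n} Real.sin (k * x) / k tend to (π − x) / 2 as n → ∞; at x = 0 every partial sum equals 0. Consequently the pointwise limit function S : ℝ → ℝ defined by S 0 = 0 and S x = (π − x)/2 for 0 < x < 2π is not continuous at 0, even though each term sin(kx)/k is a continuous function of x. -/
open Real

theorem abel_exception :
    (∀ x : ℝ, 0 < x → x < 2 * Real.pi →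
      Filter.Tendsto
        (fun n : ℕ => ∑ k ∈ Finset.Icc 1 n, Real.sin ((k : ℝ) * x) / (k : ℝ))
        Filter.atTop (nhds ((Real.pi - x) / 2))) ∧
    (∀ n : ℕ, ∑ k ∈ Finset.Icc 1 n, Real.sin ((k : ℝ) * 0) / (k : ℝ) = 0) ∧
    (∀ S : ℝ → ℝ, S 0 = 0 →
      (∀ x : ℝ, 0 < x → x < 2 * Real.pi → S x = (Real.pi - x) / 2) →
      ¬ ContinuousAt S 0) ∧
    (∀ k : ℕ, Continuous fun x : ℝ => Real.sin ((k : ℝ) * x) / (k : ℝ)) := by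
  refine ⟨?_, ?_, ?_, ?_⟩
  · intro x hx0 hx2
    set w : ℂ := Complex.exp (x * Complex.I) with hw
    have hwnorm : ‖w‖ = 1 := by
      rw [hw, Complex.norm_exp_ofReal_mul_I]
    have hw1 : w ≠ 1 := by
      rw [hw, Ne, Complex.exp_eq_one_iff]
      rintro ⟨n, hn⟩
      have h1 : (x : ℂ) * Complex.I = ((n : ℝ) * (2 * Real.pi) : ℝ) * Complex.I := by
        rw [hn]; push_cast; ring
      have h2 : x = (n : ℝ) * (2 * Real.pi) := by
        have := mul_right_cancel₀ Complex.I_ne_zero h1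
        exact_mod_cast this
      have hπ : (0 : ℝ) < 2 * Real.pi := by positivity
      have hn0 : (0 : ℝ) < (n : ℝ) := by
        by_contra h
        push_neg at h
        nlinarith
      have hn1 : (1 : ℝ) ≤ (n : ℝ) := by exact_mod_cast (by exact_mod_cast hn0 : (0:ℤ) < n)
      nlinarith
    set f : ℕ → ℂ := fun n => w ^ n / n with hf
    -- Dirichlet's test: partial sums converge to some L
    have hfa : Antitone (fun i : ℕ => 1 / ((i : ℝ) + 1)) := by
      intro a b hab
      have : (a : ℝ) + 1 ≤ (b : ℝ) + 1 := by exact_mod_cast Nat.succ_le_succ hab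
      apply one_div_le_one_div_of_le <;> [positivity; exact this]
    have hf0 : Filter.Tendsto (fun i : ℕ => 1 / ((i : ℝ) + 1)) Filter.atTop (nhds 0) :=
      tendsto_one_div_add_atTop_nhds_zero_nat
    have hzb : ∀ n : ℕ, ‖∑ i ∈ Finset.range n, w ^ (i + 1)‖ ≤ 2 / ‖w - 1‖ := by
      intro n
      have hsum : ∑ i ∈ Finset.range n, w ^ (i + 1) = w * ((w ^ n - 1) / (w - 1)) := by
        rw [← geom_sum_eq hw1]
        rw [Finset.mul_sum]
        congr 1
        ext i
        ring
      have hw1' : 0 < ‖w - 1‖ := by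
        rw [norm_pos_iff, sub_ne_zero]; exact hw1
      rw [hsum, norm_mul, hwnorm, one_mul, norm_div]
      gcongr
      calc ‖w ^ n - 1‖ ≤ ‖w ^ n‖ + ‖(1 : ℂ)‖ := norm_sub_le _ _
        _ = 2 := by rw [norm_pow, hwnorm]; norm_num
    have hC : CauchySeq (fun n => ∑ i ∈ Finset.range n, (1 / ((i : ℝ) + 1)) • w ^ (i + 1)) :=
      hfa.cauchySeq_series_mul_of_tendsto_zero_of_bounded hf0 hzb
    obtain ⟨L, hL⟩ := cauchySeq_tendsto_of_complete hC
    have hterm : ∀ i : ℕ, (1 / ((i : ℝ) + 1)) • w ^ (i + 1) = f (i + 1) := by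
      intro i
      rw [hf]
      simp only [Complex.real_smul]
      push_cast
      field_simp
    simp only [hterm] at hL
    have hS : Filter.Tendsto (fun n => ∑ i ∈ Finset.range n, f i) Filter.atTop (nhds L) := by
      rw [← Filter.tendsto_add_atTop_iff_nat 1]
      have : ∀ n : ℕ, ∑ i ∈ Finset.range (n + 1), f i = ∑ i ∈ Finset.range n, f (i + 1) := by
        intro n
        rw [Finset.sum_range_succ']
        simp [hf]
      simpa only [this] using hL
    -- Abel's limit theorem
    have habel : Filter.Tendsto (fun r : ℝ => ∑' n, f n * (r : ℂ) ^ n)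
        (nhdsWithin (1 : ℝ) (Set.Iio 1)) (nhds L) :=
      Filter.tendsto_map'_iff.mp (Complex.tendsto_tsum_powerSeries_nhdsWithin_lt hS)
    -- identify the power series with -log on (-1, 1)
    have hev : ∀ᶠ r : ℝ in nhdsWithin (1 : ℝ) (Set.Iio 1),
        ∑' n, f n * (r : ℂ) ^ n = -Complex.log (1 - r * w) := by
      filter_upwards [Ioo_mem_nhdsLT_of_mem
        (Set.mem_Ioc.mpr ⟨by norm_num, le_refl 1⟩ : (1:ℝ) ∈ Set.Ioc (-1 : ℝ) 1)] with r hr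
      have h1 : ‖(r : ℂ) * w‖ < 1 := by
        rw [norm_mul, hwnorm, mul_one, Complex.norm_real, Real.norm_eq_abs, abs_lt]
        exact ⟨hr.1, hr.2⟩
      rw [← (Complex.hasSum_taylorSeries_neg_log h1).tsum_eq]
      apply tsum_congr
      intro n
      rw [hf, mul_pow]
      ring
    have hlog : Filter.Tendsto (fun r : ℝ => -Complex.log (1 - r * w))
        (nhdsWithin (1 : ℝ) (Set.Iio 1)) (nhds (-Complex.log (1 - w))) := by
      have hslit : (1 - w) ∈ Complex.slitPlane := by
        rw [Complex.mem_slitPlane_iff]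
        rcases eq_or_ne (Real.sin x) 0 with h | h
        · left
          have hxpi : x = Real.pi := by
            rcases (Real.sin_eq_zero_iff).mp h with ⟨m, hm⟩
            have hπ := Real.pi_pos
            have hm0 : (0 : ℝ) < (m : ℝ) := by nlinarith
            have hm2 : (m : ℝ) < 2 := by nlinarith
            have hm1 : m = 1 := by
              have h1 : (0 : ℤ) < m := by exact_mod_cast hm0
              have h2 : (m : ℤ) < 2 := by exact_mod_cast hm2
              omega
            rw [hm1] at hm
            simpa using hm.symm
          rw [hw]
          simp [Complex.sub_re, Complex.exp_ofReal_mul_I_re, hxpi, Real.cos_pi]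
        · right
          rw [hw]
          simp [Complex.sub_im, Complex.exp_ofReal_mul_I_im, h]
      have hc : ContinuousAt (fun r : ℝ => -Complex.log (1 - (r : ℂ) * w)) 1 := by
        apply ContinuousAt.neg
        apply ContinuousAt.clog
        · fun_prop
        · simpa using hslit
      have := hc.tendsto.mono_left (nhdsWithin_le_nhds (s := Set.Iio (1:ℝ)))
      simpa using this
    have hLval : L = -Complex.log (1 - w) :=
      tendsto_nhds_unique (habel.congr' hev) hlog
    -- the argument of 1 - w
    have hsin2 : 0 < Real.sin (x / 2) :=
      Real.sin_pos_of_pos_of_lt_pi (by linarith) (by linarith [Real.pi_pos])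
    have harg : (1 - w).arg = (x - Real.pi) / 2 := by
      have key : 1 - w = ((2 * Real.sin (x / 2) : ℝ) : ℂ) *
          (((Real.cos ((x - Real.pi) / 2) : ℝ) : ℂ) +
            ((Real.sin ((x - Real.pi) / 2) : ℝ) : ℂ) * Complex.I) := by
        have hcos : Real.cos ((x - Real.pi) / 2) = Real.sin (x / 2) := by
          have : (x - Real.pi) / 2 = -(Real.pi / 2 - x / 2) := by ring
          rw [this, Real.cos_neg, Real.cos_pi_div_two_sub]
        have hsn : Real.sin ((x - Real.pi) / 2) = -Real.cos (x / 2) := by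
          have : (x - Real.pi) / 2 = -(Real.pi / 2 - x / 2) := by ring
          rw [this, Real.sin_neg, Real.sin_pi_div_two_sub]
        have hre : 1 - Real.cos x = 2 * Real.sin (x / 2) * Real.cos ((x - Real.pi) / 2) := by
          rw [hcos]
          have h1 := Real.cos_two_mul' (x / 2)
          rw [show 2 * (x / 2) = x by ring] at h1
          have h2 := Real.sin_sq_add_cos_sq (x / 2)
          nlinarith
        have him : -Real.sin x = 2 * Real.sin (x / 2) * Real.sin ((x - Real.pi) / 2) := by
          rw [hsn]
          have h2 : Real.sin (2 * (x / 2)) = 2 * Real.sin (x / 2) * Real.cos (x / 2) :=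
            Real.sin_two_mul (x / 2)
          rw [show 2 * (x / 2) = x by ring] at h2
          linarith
        apply Complex.ext
        · rw [hw]
          simp only [Complex.sub_re, Complex.one_re, Complex.exp_ofReal_mul_I_re,
            Complex.mul_re, Complex.add_re, Complex.add_im, Complex.mul_im,
            Complex.I_re, Complex.I_im, Complex.ofReal_re, Complex.ofReal_im]
          linear_combination hre
        · rw [hw]
          simp only [Complex.sub_im, Complex.one_im, Complex.exp_ofReal_mul_I_im,
            Complex.mul_re, Complex.add_re, Complex.add_im, Complex.mul_im,
            Complex.I_re, Complex.I_im, Complex.ofReal_re, Complex.ofReal_im]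
          linear_combination him
      rw [key, Complex.ofReal_cos, Complex.ofReal_sin,
        Complex.arg_real_mul _ (by positivity),
        Complex.arg_cos_add_sin_mul_I]
      constructor
      · have := Real.pi_pos; linarith
      · have := Real.pi_pos; linarith
    have hLim : L.im = (Real.pi - x) / 2 := by
      rw [hLval, Complex.neg_im, Complex.log_im, harg]
      ring
    -- pass to imaginary parts
    have him : Filter.Tendsto (fun n => (∑ i ∈ Finset.range n, f i).im)
        Filter.atTop (nhds L.im) :=
      (Complex.continuous_im.tendsto L).comp hS
    have hsum_im : ∀ n : ℕ, (∑ i ∈ Finset.range n, f i).im =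
        ∑ i ∈ Finset.range n, Real.sin ((i : ℝ) * x) / (i : ℝ) := by
      intro n
      rw [Complex.im_sum]
      apply Finset.sum_congr rfl
      intro i _
      show (w ^ i / ((i : ℕ) : ℂ)).im = _
      have hwi : w ^ i = Complex.exp ((((i : ℝ) * x : ℝ)) * Complex.I) := by
        rw [hw, ← Complex.exp_nat_mul]
        congr 1
        push_cast
        ring
      rw [hwi, show ((i : ℕ) : ℂ) = (((i : ℝ)) : ℂ) by push_cast; rfl,
        Complex.div_ofReal_im, Complex.exp_ofReal_mul_I_im]
    have hfin : ∀ n : ℕ, ∑ k ∈ Finset.Icc 1 n, Real.sin ((k : ℝ) * x) / (k : ℝ) =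
        ∑ i ∈ Finset.range (n + 1), Real.sin ((i : ℝ) * x) / (i : ℝ) := by
      intro n
      induction n with
      | zero => simp
      | succ m ih =>
        rw [Finset.sum_Icc_succ_top (by omega), ih, Finset.sum_range_succ _ (m + 1)]
    rw [← hLim]
    simp only [hfin]
    have := him.comp (Filter.tendsto_add_atTop_nat 1)
    simp only [Function.comp_def, hsum_im] at this
    exact this
  · intro n
    simp
  · intro S hS0 hSx hcont
    have h1 : Filter.Tendsto S (nhdsWithin 0 (Set.Ioi 0)) (nhds 0) := by
      have := hcont.tendsto
      rw [hS0] at this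
      exact this.mono_left nhdsWithin_le_nhds
    have h2 : Filter.Tendsto S (nhdsWithin 0 (Set.Ioi 0)) (nhds (Real.pi / 2)) := by
      have hc : Filter.Tendsto (fun y : ℝ => (Real.pi - y) / 2)
          (nhdsWithin 0 (Set.Ioi 0)) (nhds ((Real.pi - 0) / 2)) := by
        apply Filter.Tendsto.mono_left _ nhdsWithin_le_nhds
        exact (Continuous.tendsto (by continuity) 0)
      rw [show (Real.pi - 0) / 2 = Real.pi / 2 by ring] at hc
      apply hc.congr'
      filter_upwards [Ioo_mem_nhdsGT_of_mem
        (Set.mem_Ico.mpr ⟨le_refl 0, by positivity⟩ : (0:ℝ) ∈ Set.Ico 0 (2 * Real.pi))] with y hy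
      exact (hSx y hy.1 hy.2).symm
    have := tendsto_nhds_unique h1 h2
    have hπ := Real.pi_pos
    linarith
  · intro k
    exact (Real.continuous_sin.comp (continuous_const.mul continuous_id)).div_const _
end

section
/- The sequence n ↦ Real.sin (n / 2) − Real.sin n (with n : ℕ cast to ℝ) does not tend to 0 as n → ∞: ¬ Filter.Tendsto (fun n : ℕ => Real.sin (n / 2) − Real.sin n) Filter.atTop (nhds 0). (This is the difference f(x+i) − f(x) for f(x) = sin(1/x) evaluated at x = 1/n with infinitesimal increment i = 1/n.) -/
open Filter Real

lemma key_abs (c : ℝ) (hc : |c| ≤ 1) :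
    (1:ℝ)/4 ≤ |1 - 2*c| + |2*c*(3 - 4*c^2)| := by
  rcases le_or_gt (1/4) |1 - 2*c| with h | h
  · linarith [abs_nonneg (2*c*(3 - 4*c^2))]
  · have h' := abs_lt.mp h
    have hcl : (3:ℝ)/8 < c := by linarith
    have hcu : c < (5:ℝ)/8 := by linarith
    have h1 : (1:ℝ) ≤ 2*c*(3 - 4*c^2) := by nlinarith
    have := le_abs_self (2*c*(3 - 4*c^2))
    linarith [abs_nonneg (1 - 2*c)]

theorem sin_half_sub_sin_not_tendsto_zero :
    ¬ Filter.Tendsto (fun n : ℕ => Real.sin ((n : ℝ) / 2) - Real.sin (n : ℝ))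
        Filter.atTop (nhds 0) := by
  intro h
  have t2 : Tendsto (fun n : ℕ => 2*n) atTop atTop :=
    StrictMono.tendsto_atTop (fun a b hab => by omega)
  have t4 : Tendsto (fun n : ℕ => 4*n) atTop atTop :=
    StrictMono.tendsto_atTop (fun a b hab => by omega)
  have h2 : Tendsto (fun n : ℕ => Real.sin n - Real.sin (2*n)) atTop (nhds 0) := by
    have := h.comp t2
    convert this using 1
    funext n
    simp only [Function.comp]
    push_cast
    ring_nf
  have h4 : Tendsto (fun n : ℕ => Real.sin (2*n) - Real.sin (4*n)) atTop (nhds 0) := by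
    have := h.comp t4
    convert this using 1
    funext n
    simp only [Function.comp]
    push_cast
    ring_nf
  -- rewrite using identities
  have hA : ∀ n : ℕ, Real.sin n - Real.sin (2*n) = Real.sin n * (1 - 2 * Real.cos n) := by
    intro n
    rw [Real.sin_two_mul]
    ring
  have hB : ∀ n : ℕ, Real.sin (2*n) - Real.sin (4*n)
      = Real.sin n * (2 * Real.cos n * (3 - 4 * (Real.cos n)^2)) := by
    intro n
    have h4n : (4:ℝ)*n = 2*(2*n) := by ring
    rw [h4n, Real.sin_two_mul (2*n), Real.sin_two_mul, Real.cos_two_mul]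
    ring
  -- sin n → 0
  have hs : Tendsto (fun n : ℕ => Real.sin n) atTop (nhds 0) := by
    have habs : Tendsto (fun n : ℕ =>
        4 * (|Real.sin n - Real.sin (2*n)| + |Real.sin (2*n) - Real.sin (4*n)|))
        atTop (nhds 0) := by
      have := ((h2.abs.add h4.abs).const_mul (4:ℝ))
      simpa using this
    apply squeeze_zero_norm _ habs
    intro n
    simp only [Real.norm_eq_abs]
    have hc := Real.abs_cos_le_one (n:ℝ)
    have hk := key_abs (Real.cos n) hc
    have e1 : |Real.sin n - Real.sin (2*n)| = |Real.sin n| * |1 - 2*Real.cos n| := by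
      rw [hA n, abs_mul]
    have e2 : |Real.sin (2*n) - Real.sin (4*n)|
        = |Real.sin n| * |2*Real.cos n*(3 - 4*(Real.cos n)^2)| := by
      rw [hB n, abs_mul]
    rw [e1, e2]
    have := abs_nonneg (Real.sin (n:ℝ))
    nlinarith
  -- sin (n+1) → 0
  have hs1 : Tendsto (fun n : ℕ => Real.sin ((n:ℝ) + 1)) atTop (nhds 0) := by
    have t1 : Tendsto (fun n : ℕ => n + 1) atTop atTop :=
      StrictMono.tendsto_atTop (fun a b hab => by omega)
    have := hs.comp t1
    convert this using 1
    funext n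
    simp [Function.comp]
  -- cos n → 0
  have hcos : Tendsto (fun n : ℕ => Real.cos n) atTop (nhds 0) := by
    have key : ∀ n : ℕ, Real.cos (n:ℝ)
        = (Real.sin ((n:ℝ)+1) - Real.sin n * Real.cos 1) / Real.sin 1 := by
      intro n
      rw [Real.sin_add]
      field_simp [Real.sin_pos_of_pos_of_lt_pi one_pos (by linarith [Real.pi_gt_three]) |>.ne']
      ring
    have : Tendsto (fun n : ℕ =>
        (Real.sin ((n:ℝ)+1) - Real.sin n * Real.cos 1) / Real.sin 1) atTop (nhds 0) := by
      have := (hs1.sub (hs.mul_const (Real.cos 1))).div_const (Real.sin 1)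
      simpa using this
    simpa only [← key] using this
  -- contradiction: sin² + cos² = 1 → 0
  have hone : Tendsto (fun n : ℕ => Real.sin (n:ℝ)^2 + Real.cos (n:ℝ)^2) atTop (nhds 0) := by
    have := (hs.mul hs).add (hcos.mul hcos)
    simpa [sq] using this
  have hone' : Tendsto (fun n : ℕ => Real.sin (n:ℝ)^2 + Real.cos (n:ℝ)^2) atTop (nhds 1) := by
    simp only [Real.sin_sq_add_cos_sq]
    exact tendsto_const_nhds
  have := tendsto_nhds_unique hone hone'
  norm_num at this
end

section
/- (sin(1/x) fails Cauchy's continuity test on the B-continuum.) Let f : ℝ → ℝ be f x = Real.sin x⁻¹, and set ξ = Hyperreal.ofSeq (fun n => (2 * π * (n + 1) + π / 2)⁻¹) and η = Hyperreal.ofSeq (fun n => (2 * π * (n + 1))⁻¹). Then ξ and η are positive infinitesimal hyperreals, ξ − η is infinitesimal, yet Filter.Germ.map f ξ − Filter.Germ.map f η = 1; in particular the infinitesimal increment ξ − η of the variable does not produce an infinitesimal increment of the function. -/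
open Hyperreal Real

theorem sin_inv_fails_cauchy_continuity_test (f : ℝ → ℝ) (hf : ∀ x : ℝ, f x = Real.sin x⁻¹)
    (ξ η : ℝ*)
    (hξ : ξ = Hyperreal.ofSeq (fun n : ℕ => (2 * Real.pi * ((n : ℝ) + 1) + Real.pi / 2)⁻¹))
    (hη : η = Hyperreal.ofSeq (fun n : ℕ => (2 * Real.pi * ((n : ℝ) + 1))⁻¹)) :
    0 < ξ ∧ Hyperreal.Infinitesimal ξ ∧
    0 < η ∧ Hyperreal.Infinitesimal η ∧
    Hyperreal.Infinitesimal (ξ - η) ∧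
    Filter.Germ.map f ξ - Filter.Germ.map f η = 1 := by
  have hpi := Real.pi_pos
  have hden1 : ∀ n : ℕ, 0 < 2 * Real.pi * ((n : ℝ) + 1) + Real.pi / 2 := by
    intro n
    have : (0 : ℝ) < (n : ℝ) + 1 := by positivity
    positivity
  have hden2 : ∀ n : ℕ, 0 < 2 * Real.pi * ((n : ℝ) + 1) := by
    intro n
    have : (0 : ℝ) < (n : ℝ) + 1 := by positivity
    positivity
  have hzero : (0 : ℝ*) = ofSeq (fun _ => 0) := rfl
  have hξpos : 0 < ξ := by
    rw [hξ, hzero, ofSeq_lt_ofSeq]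
    exact Filter.Eventually.of_forall fun n => inv_pos.2 (hden1 n)
  have hηpos : 0 < η := by
    rw [hη, hzero, ofSeq_lt_ofSeq]
    exact Filter.Eventually.of_forall fun n => inv_pos.2 (hden2 n)
  have ht1 : Filter.Tendsto (fun n : ℕ => (2 * Real.pi * ((n : ℝ) + 1) + Real.pi / 2)⁻¹)
      Filter.atTop (nhds 0) := by
    apply Filter.Tendsto.inv_tendsto_atTop
    apply Filter.tendsto_atTop_add_const_right
    apply Filter.Tendsto.const_mul_atTop (by positivity)
    exact Filter.tendsto_atTop_add_const_right _ _ tendsto_natCast_atTop_atTop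
  have ht2 : Filter.Tendsto (fun n : ℕ => (2 * Real.pi * ((n : ℝ) + 1))⁻¹)
      Filter.atTop (nhds 0) := by
    apply Filter.Tendsto.inv_tendsto_atTop
    apply Filter.Tendsto.const_mul_atTop (by positivity)
    exact Filter.tendsto_atTop_add_const_right _ _ tendsto_natCast_atTop_atTop
  have hξinf : Infinitesimal ξ := hξ ▸ infinitesimal_of_tendsto_zero ht1
  have hηinf : Infinitesimal η := hη ▸ infinitesimal_of_tendsto_zero ht2
  refine ⟨hξpos, hξinf, hηpos, hηinf, by simpa [Infinitesimal] using hξinf.sub hηinf, ?_⟩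
  have hmap1 : Filter.Germ.map f ξ = ofSeq (fun n => 1) := by
    rw [hξ]
    show ofSeq _ = _
    apply Filter.Germ.coe_eq.2
    apply Filter.Eventually.of_forall
    intro n
    show f _ = 1
    rw [hf, inv_inv]
    have h : 2 * Real.pi * ((n : ℝ) + 1) + Real.pi / 2
        = Real.pi / 2 + ((n : ℕ) + 1 : ℕ) * (2 * Real.pi) := by push_cast; ring
    rw [h, Real.sin_add_nat_mul_two_pi, Real.sin_pi_div_two]
  have hmap2 : Filter.Germ.map f η = ofSeq (fun n => 0) := by
    rw [hη]
    show ofSeq _ = _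
    apply Filter.Germ.coe_eq.2
    apply Filter.Eventually.of_forall
    intro n
    show f _ = 0
    rw [hf, inv_inv]
    have h : 2 * Real.pi * ((n : ℝ) + 1) = 0 + ((n : ℕ) + 1 : ℕ) * (2 * Real.pi) := by
      push_cast; ring
    rw [h, Real.sin_add_nat_mul_two_pi, Real.sin_zero]
  rw [hmap1, hmap2]
  show ofSeq _ - ofSeq _ = 1
  rw [show (1 : ℝ*) = ofSeq (fun _ => 1) from rfl]
  apply Filter.Germ.coe_eq.2
  exact Filter.Eventually.of_forall fun n => by simp
end

section
/- (Fermat–Robinson standard part definition of the derivative.) Let f : ℝ → ℝ and x, L : ℝ. Then f has derivative L at x (HasDerivAt f L x) if and only if for every nonzero infinitesimal hyperreal ε : ℝ*, the difference quotient (Filter.Germ.map f (↑x + ε) − ↑(f x)) / ε is infinitely close to L (Hyperreal.IsSt ((Filter.Germ.map f (↑x + ε) − ↑(f x)) / ε) L). -/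
open Hyperreal Filter Topology

theorem hasDerivAt_iff_isSt_diffQuotient (f : ℝ → ℝ) (x L : ℝ) :
    HasDerivAt f L x ↔
      ∀ e : ℝ*, e ≠ 0 → Hyperreal.Infinitesimal e →
        Hyperreal.IsSt
          (((show ℝ* from Filter.Germ.map f ((x : ℝ*) + e)) - ((f x : ℝ) : ℝ*)) / e) L := by
  set q : ℝ → ℝ := fun t => (f (x + t) - f x) / t with hqdef
  have hiff : HasDerivAt f L x ↔ Tendsto q (𝓝[≠] (0:ℝ)) (𝓝 L) := by
    rw [hasDerivAt_iff_tendsto_slope_zero]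
    apply tendsto_congr
    intro t
    simp [hqdef, smul_eq_mul, div_eq_inv_mul]
  have key : ∀ u : ℕ → ℝ,
      ((show ℝ* from Filter.Germ.map f ((x : ℝ*) + ofSeq u)) - ((f x : ℝ) : ℝ*)) / ofSeq u
        = ofSeq (fun n => q (u n)) := fun u => rfl
  rw [hiff]
  constructor
  · intro h e he hinf
    obtain ⟨u, rfl⟩ := ofSeq_surjective e
    have hne : ∀ᶠ n in hyperfilter ℕ, u n ≠ 0 := by
      have : ¬ (∀ᶠ n in (hyperfilter ℕ : Filter ℕ), u n = 0) := fun hh => he (Germ.coe_eq.2 hh)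
      exact Ultrafilter.eventually_not.2 this
    have h0 : Tendsto u (hyperfilter ℕ : Filter ℕ) (𝓝 0) :=
      isSt_ofSeq_iff_tendsto.1 hinf
    have hu : Tendsto u (hyperfilter ℕ : Filter ℕ) (𝓝[≠] (0:ℝ)) := by
      rw [tendsto_nhdsWithin_iff]
      exact ⟨h0, hne⟩
    rw [key]
    exact isSt_ofSeq_iff_tendsto.2 (h.comp hu)
  · intro H
    by_contra hT
    rw [Metric.tendsto_nhds] at hT
    push_neg at hT
    obtain ⟨δ, hδ, hfreq⟩ := hT
    have hbasis := Metric.nhdsWithin_basis_ball (x := (0:ℝ)) (s := {(0:ℝ)}ᶜ)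
    rw [hbasis.frequently_iff] at hfreq
    have hchoice : ∀ n : ℕ, ∃ t : ℝ, t ∈ Metric.ball (0:ℝ) (1/(n+1)) ∩ {(0:ℝ)}ᶜ ∧
        δ ≤ dist (q t) L := by
      intro n
      obtain ⟨t, ht, ht2⟩ := hfreq (1/(n+1)) (by positivity)
      exact ⟨t, ht, ht2⟩
    choose u hu hud using hchoice
    have hu0 : ∀ n, u n ≠ 0 := fun n => (hu n).2
    have htend : Tendsto u atTop (𝓝 0) := by
      have hb : ∀ n, |u n| < 1/(n+1) := by
        intro n
        have := (hu n).1
        simpa [Real.dist_eq] using this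
      have h1 : Tendsto (fun n : ℕ => 1/((n:ℝ)+1)) atTop (𝓝 0) :=
        tendsto_one_div_add_atTop_nhds_zero_nat
      rw [tendsto_zero_iff_abs_tendsto_zero]
      exact squeeze_zero (fun n => abs_nonneg _) (fun n => (hb n).le) h1
    have hhyper : Tendsto u (hyperfilter ℕ : Filter ℕ) (𝓝 0) :=
      htend.mono_left (by rw [← Nat.cofinite_eq_atTop]; exact hyperfilter_le_cofinite)
    have hinf : Infinitesimal (ofSeq u) := isSt_ofSeq_iff_tendsto.2 hhyper
    have hne : ofSeq u ≠ 0 := by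
      intro hh
      have : ∀ᶠ n in (hyperfilter ℕ : Filter ℕ), u n = 0 := Germ.coe_eq.1 hh
      obtain ⟨n, hn⟩ := this.exists
      exact hu0 n hn
    have := H (ofSeq u) hne hinf
    rw [key] at this
    have htL : Tendsto (fun n => q (u n)) (hyperfilter ℕ : Filter ℕ) (𝓝 L) :=
      isSt_ofSeq_iff_tendsto.1 this
    have : ∀ᶠ n in (hyperfilter ℕ : Filter ℕ), dist (q (u n)) L < δ :=
      htL (Metric.ball_mem_nhds L hδ)
    obtain ⟨n, hn⟩ := this.exists
    exact absurd hn (not_lt.2 (hud n))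
end
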